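/- Define the Hamilton numbers by H_n = ℓ_{n-1} - 1 for n ≥ 1, where ℓ_0 = 3 and ℓ_{n+1} = 1 + Σ_{j=0}^{n} (-1)^j * binom(ℓ_{n-j}, j+2). Then H_1 = 2 and for all n ≥ 1, H_{n+1} = 2 + Σ_{j=0}^{n-1} (-1)^j * binom(H_{n-j}, j+2). -/

import Mathlib

lemma descFact_pow (k a b : ℕ) (hba : b ≤ a) :
    b.descFactorial k * a ^ k ≤ a.descFactorial k * b ^ k := by
  induction k with
  | zero => simp
  | succ k ih =>
    rw [Nat.descFactorial_succ, Nat.descFactorial_succ, pow_succ, pow_succ]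
    have h1 : (b - k) * a ≤ (a - k) * b := by
      have e1 : (b - k) * a = b * a - k * a := Nat.sub_mul b k a
      have e2 : (a - k) * b = a * b - k * b := Nat.sub_mul a k b
      have e3 : b * a = a * b := mul_comm b a
      have e4 : k * b ≤ k * a := Nat.mul_le_mul_left k hba
      omega
    calc (b - k) * b.descFactorial k * (a ^ k * a)
        = ((b - k) * a) * (b.descFactorial k * a ^ k) := by ring
      _ ≤ ((a - k) * b) * (a.descFactorial k * b ^ k) := Nat.mul_le_mul h1 ih
      _ = (a - k) * a.descFactorial k * (b ^ k * b) := by ring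

lemma choose_pow (k a b : ℕ) (hba : b ≤ a) :
    b.choose k * a ^ k ≤ a.choose k * b ^ k := by
  have h := descFact_pow k a b hba
  rw [Nat.descFactorial_eq_factorial_mul_choose, Nat.descFactorial_eq_factorial_mul_choose] at h
  have hk : 0 < k.factorial := k.factorial_pos
  rw [mul_assoc, mul_assoc] at h
  exact Nat.le_of_mul_le_mul_left h hk

lemma key_ineq (a b k : ℕ) (hb : 2 ≤ b) (hba : b ≤ a) (hinv : b * b + b ≤ 3 * a)
    (hk : 2 ≤ k) : b.choose (k + 1) ≤ a.choose k := by
  by_cases hbk : b < k + 1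
  · rw [Nat.choose_eq_zero_of_lt hbk]; exact Nat.zero_le _
  push_neg at hbk
  have hb3 : 3 ≤ b := by omega
  have hba2 : b * b ≤ 3 * a := by omega
  have step1 : b ^ k * b.choose k ≤ 3 ^ k * a.choose k := by
    have h1 : b.choose k * a ^ k ≤ a.choose k * b ^ k := choose_pow k a b hba
    have h2 : (b*b) ^ k ≤ (3*a) ^ k := Nat.pow_le_pow_left hba2 k
    have h3 : b.choose k * (b*b)^k ≤ b.choose k * (3*a)^k := Nat.mul_le_mul_left _ h2
    have h4 : b.choose k * a ^ k * 3 ^ k ≤ a.choose k * b ^ k * 3 ^ k :=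
      Nat.mul_le_mul_right _ h1
    have h5 : b.choose k * b^k * b^k ≤ a.choose k * b^k * 3^k := by
      calc b.choose k * b^k * b^k = b.choose k * (b*b)^k := by rw [mul_pow]; ring
        _ ≤ b.choose k * (3*a)^k := h3
        _ = b.choose k * a^k * 3^k := by rw [mul_pow]; ring
        _ ≤ a.choose k * b^k * 3^k := h4
    have hbk0 : 0 < b ^ k := Nat.pow_pos (by omega)
    exact Nat.le_of_mul_le_mul_right (by
      calc b ^ k * b.choose k * b ^ k = b.choose k * b^k * b^k := by ring
        _ ≤ a.choose k * b^k * 3^k := h5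
        _ = 3 ^ k * a.choose k * b ^ k := by ring) hbk0
  have step2 : b * b.choose k ≤ 3 * a.choose k := by
    obtain ⟨m, rfl⟩ : ∃ m, k = m + 1 := ⟨k - 1, by omega⟩
    have h1 : 3 ^ m * (b * b.choose (m+1)) ≤ 3 ^ m * (3 * a.choose (m+1)) := by
      calc 3 ^ m * (b * b.choose (m+1)) ≤ b ^ m * (b * b.choose (m+1)) :=
            Nat.mul_le_mul_right _ (Nat.pow_le_pow_left hb3 m)
        _ = b ^ (m+1) * b.choose (m+1) := by ring
        _ ≤ 3 ^ (m+1) * a.choose (m+1) := step1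
        _ = 3 ^ m * (3 * a.choose (m+1)) := by ring
    exact Nat.le_of_mul_le_mul_left h1 (Nat.pow_pos (by omega))
  have h6 : b.choose (k+1) * 3 ≤ b.choose (k+1) * (k+1) := Nat.mul_le_mul_left _ (by omega)
  have h7 : b.choose (k+1) * (k+1) = b.choose k * (b - k) := Nat.choose_succ_right_eq b k
  have h8 : b.choose k * (b - k) ≤ b.choose k * b := Nat.mul_le_mul_left _ (Nat.sub_le b k)
  have h9 : b.choose k * b = b * b.choose k := mul_comm _ _
  omega

lemma alt_peel (n : ℕ) (c : ℕ → ℤ) :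
    ∑ j ∈ Finset.range (n+1), (-1)^j * c j
      = c 0 - ∑ j ∈ Finset.range n, (-1)^j * c (j+1) := by
  rw [Finset.sum_range_succ']
  have h : ∀ j ∈ Finset.range n, (-1:ℤ)^(j+1) * c (j+1) = -((-1)^j * c (j+1)) := by
    intro j _; ring
  rw [Finset.sum_congr rfl h, Finset.sum_neg_distrib]
  simp; ring

lemma alt_bounds : ∀ (n : ℕ) (c : ℕ → ℤ),
    (∀ j, j + 1 < n → c (j+1) ≤ c j) → (∀ j, j < n → 0 ≤ c j) →
    0 ≤ ∑ j ∈ Finset.range n, (-1)^j * c j ∧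
      ∑ j ∈ Finset.range n, (-1)^j * c j ≤ max (c 0) 0 := by
  intro n
  induction n with
  | zero => intro c _ _; simp
  | succ n ih =>
    intro c hmono hnn
    rw [alt_peel]
    obtain ⟨ih1, ih2⟩ := ih (fun j => c (j+1)) (fun j hj => hmono (j+1) (by omega))
      (fun j hj => hnn (j+1) (by omega))
    have hc0 : 0 ≤ c 0 := hnn 0 (by omega)
    constructor
    · rcases Nat.eq_zero_or_pos n with h | h
      · subst h; simpa using hc0
      · have h1 : c 1 ≤ c 0 := hmono 0 (by omega)
        have : max (c 1) 0 ≤ c 0 := max_le h1 hc0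
        linarith
    · have h1 : 0 ≤ max (c 0) 0 := le_max_right _ _
      have h2 : c 0 ≤ max (c 0) 0 := le_max_left _ _
      linarith

lemma alt_lower (n : ℕ) (c : ℕ → ℤ)
    (hmono : ∀ j, j + 1 < n + 2 → c (j+1) ≤ c j) (hnn : ∀ j, j < n + 2 → 0 ≤ c j) :
    c 0 - c 1 ≤ ∑ j ∈ Finset.range (n+2), (-1)^j * c j := by
  rw [alt_peel]
  obtain ⟨_, h2⟩ := alt_bounds (n+1) (fun j => c (j+1))
    (fun j hj => hmono (j+1) (by omega)) (fun j hj => hnn (j+1) (by omega))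
  have hc1 : 0 ≤ c 1 := hnn 1 (by omega)
  have hm : max (c 1) 0 = c 1 := max_eq_left hc1
  simp only [hm] at h2
  linarith

lemma poly_key (a b : ℤ) (hb : 2 ≤ b) (hba : b ≤ a) (hinv : b^2 + b ≤ 3*a) :
    b^3 ≤ a^2 - 5*a + 12 + 3*b^2 - 2*b := by
  rcases le_or_gt b 6 with h | h
  · interval_cases b <;> nlinarith [sq_nonneg a, sq_nonneg (a-3), sq_nonneg (a-7), sq_nonneg (a-10), sq_nonneg (a-14)]
  · nlinarith [sq_nonneg (3*a - b^2 - b), mul_nonneg (sub_nonneg.2 hinv) (by nlinarith : (0:ℤ) ≤ 2*b^2 + 2*b - 15),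
      mul_nonneg (mul_nonneg (mul_nonneg (by linarith : (0:ℤ) ≤ b) (by linarith : (0:ℤ) ≤ b)) (by linarith : (0:ℤ) ≤ b)) (by linarith : (0:ℤ) ≤ b - 7),
      mul_nonneg (by linarith : (0:ℤ) ≤ b) (by linarith : (0:ℤ) ≤ 13*b - 33)]

lemma choose2 (x : ℕ) : 2 * x.choose 2 = x * (x - 1) := by
  have h := Nat.descFactorial_eq_factorial_mul_choose x 2
  have h2 : x.descFactorial 2 = (x - 1) * x := by
    simp [Nat.descFactorial_succ, Nat.descFactorial]
  rw [h2] at h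
  have : (x - 1) * x = x * (x - 1) := mul_comm _ _
  simp [Nat.factorial] at h
  omega

lemma choose3 (x : ℕ) : 6 * x.choose 3 = x * (x - 1) * (x - 2) := by
  have h := Nat.descFactorial_eq_factorial_mul_choose x 3
  have h2 : x.descFactorial 3 = (x - 2) * ((x - 1) * x) := by
    simp [Nat.descFactorial_succ, Nat.descFactorial]
  rw [h2] at h
  have e : (x - 2) * ((x - 1) * x) = x * (x - 1) * (x - 2) := by ring
  simp [Nat.factorial] at h
  omega

lemma bundle (ℓ : ℕ → ℤ) (h0 : ℓ 0 = 3)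
    (hrec : ∀ n : ℕ, ℓ (n + 1) =
      1 + ∑ j ∈ Finset.range (n + 1), (-1) ^ j * ((ℓ (n - j)).toNat.choose (j + 2) : ℤ)) :
    ∀ n : ℕ,
      2 ≤ ℓ n - 1 ∧
      ℓ n - 1 ≤ ℓ (n+1) - 1 ∧
      (ℓ n - 1)^2 + (ℓ n - 1) ≤ 3 * (ℓ (n+1) - 1) ∧
      ℓ (n+1) - 1 = 2 + ∑ j ∈ Finset.range (n+1),
        (-1)^j * (((ℓ (n - j) - 1).toNat.choose (j + 2) : ℤ)) := by
  intro n
  induction n using Nat.strong_induction_on with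
  | _ n ih =>
  match n with
  | 0 =>
    show 2 ≤ ℓ 0 - 1 ∧ ℓ 0 - 1 ≤ ℓ 1 - 1 ∧ (ℓ 0 - 1)^2 + (ℓ 0 - 1) ≤ 3 * (ℓ 1 - 1) ∧
      ℓ 1 - 1 = 2 + ∑ j ∈ Finset.range 1, (-1:ℤ)^j * (((ℓ (0 - j) - 1).toNat.choose (j+2) : ℤ))
    have h1 : ℓ 1 = 4 := by
      have h := hrec 0
      rw [Finset.sum_range_one] at h
      norm_num [h0] at h
      have e : ((Int.toNat 3).choose 2 : ℤ) = 3 := by decide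
      omega
    refine ⟨by omega, by omega, by rw [h1, h0]; norm_num, ?_⟩
    rw [Finset.sum_range_one, h1]
    norm_num [h0]
    decide
  | Nat.succ m =>
    show 2 ≤ ℓ (m+1) - 1 ∧ ℓ (m+1) - 1 ≤ ℓ (m+2) - 1 ∧
      (ℓ (m+1) - 1)^2 + (ℓ (m+1) - 1) ≤ 3 * (ℓ (m+2) - 1) ∧
      ℓ (m+2) - 1 = 2 + ∑ j ∈ Finset.range (m+2),
        (-1:ℤ)^j * (((ℓ (m+1-j) - 1).toNat.choose (j+2) : ℤ))
    -- notation
    have ihm := ih m (by omega)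
    have hGle : ∀ x, x ≤ m + 1 → 2 ≤ ℓ x - 1 := by
      intro x hx
      rcases Nat.lt_or_ge x (m+1) with h | h
      · exact (ih x (by omega)).1
      · have hx1 : x = m + 1 := by omega
        subst hx1
        exact le_trans ihm.1 ihm.2.1
    -- split the recursion sum
    have key : ℓ (m+2) - 1 =
        (∑ j ∈ Finset.range (m+2), (-1)^j * (((ℓ (m+1-j) - 1).toNat.choose (j+1) : ℤ)))
        + (∑ j ∈ Finset.range (m+2), (-1)^j * (((ℓ (m+1-j) - 1).toNat.choose (j+2) : ℤ))) := by
      rw [hrec (m+1)]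
      have hterm : ∀ j ∈ Finset.range (m+2), (-1:ℤ)^j * ((ℓ (m+1-j)).toNat.choose (j+2) : ℤ)
          = (-1)^j * (((ℓ (m+1-j) - 1).toNat.choose (j+1) : ℤ))
            + (-1)^j * (((ℓ (m+1-j) - 1).toNat.choose (j+2) : ℤ)) := by
        intro j hj
        have h2 : 2 ≤ ℓ (m+1-j) - 1 := hGle (m+1-j) (by omega)
        have htn : (ℓ (m+1-j)).toNat = (ℓ (m+1-j) - 1).toNat + 1 := by omega
        rw [htn, Nat.choose_succ_succ]
        push_cast
        ring
      rw [Finset.sum_congr rfl hterm, Finset.sum_add_distrib]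
      ring
    -- the (j+1)-sum equals 2
    have hT : (∑ j ∈ Finset.range (m+2), (-1)^j * (((ℓ (m+1-j) - 1).toNat.choose (j+1) : ℤ))) = 2 := by
      show (∑ j ∈ Finset.range (m+1+1), (-1)^j * (((ℓ (m+1-j) - 1).toNat.choose (j+1) : ℤ))) = 2
      have hp := alt_peel (m+1) (fun j => (((ℓ (m+1-j) - 1).toNat.choose (j+1) : ℤ)))
      beta_reduce at hp
      rw [hp]
      have e0 : (((ℓ (m+1-0) - 1).toNat.choose (0+1) : ℕ) : ℤ) = ℓ (m+1) - 1 := by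
        have h2 := hGle (m+1) le_rfl
        rw [show m+1-0 = m+1 from rfl, Nat.choose_one_right]
        exact Int.toNat_of_nonneg (by omega)
      have esum : ∑ j ∈ Finset.range (m+1), (-1:ℤ)^j * (((ℓ (m+1-(j+1)) - 1).toNat.choose ((j+1)+1) : ℤ))
          = ℓ (m+1) - 1 - 2 := by
        have hmain := ihm.2.2.2
        have hc : ∀ j ∈ Finset.range (m+1), (-1:ℤ)^j * (((ℓ (m+1-(j+1)) - 1).toNat.choose ((j+1)+1) : ℤ))
            = (-1)^j * (((ℓ (m - j) - 1).toNat.choose (j+2) : ℤ)) := by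
          intro j hj
          have hidx : m + 1 - (j+1) = m - j := by omega
          rw [hidx]
        rw [Finset.sum_congr rfl hc]
        linarith [hmain]
      rw [e0, esum]
      ring
    -- bounds on the (j+2)-sum
    have hmono : ∀ j, j + 1 < m + 2 →
        (((ℓ (m+1-(j+1)) - 1).toNat.choose ((j+1)+2) : ℤ)) ≤ (((ℓ (m+1-j) - 1).toNat.choose (j+2) : ℤ)) := by
      intro j hj
      have hidx : m + 1 - (j+1) = m - j := by omega
      rw [hidx]
      have hb2 : 2 ≤ ℓ (m - j) - 1 := hGle (m-j) (by omega)
      have ihj := ih (m - j) (by omega)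
      have hidx2 : m - j + 1 = m + 1 - j := by omega
      have hba : ℓ (m-j) - 1 ≤ ℓ (m+1-j) - 1 := by
        have := ihj.2.1; rwa [hidx2] at this
      have hinv : (ℓ (m-j) - 1)^2 + (ℓ (m-j) - 1) ≤ 3 * (ℓ (m+1-j) - 1) := by
        have := ihj.2.2.1; rwa [hidx2] at this
      have hkey := key_ineq (ℓ (m+1-j) - 1).toNat (ℓ (m-j) - 1).toNat (j+2)
        (by omega) (by omega)
        (by
          have ea : ((ℓ (m+1-j) - 1).toNat : ℤ) = ℓ (m+1-j) - 1 := Int.toNat_of_nonneg (by omega)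
          have eb : ((ℓ (m-j) - 1).toNat : ℤ) = ℓ (m-j) - 1 := Int.toNat_of_nonneg (by omega)
          zify
          rw [ea, eb]
          nlinarith)
        (by omega)
      exact_mod_cast hkey
    have hnn : ∀ j, j < m + 2 → (0:ℤ) ≤ (((ℓ (m+1-j) - 1).toNat.choose (j+2) : ℤ)) := by
      intro j _; positivity
    have hS0 := (alt_bounds (m+2) (fun j => (((ℓ (m+1-j) - 1).toNat.choose (j+2) : ℤ))) hmono hnn).1
    have hSlow := alt_lower m (fun j => (((ℓ (m+1-j) - 1).toNat.choose (j+2) : ℤ))) hmono hnn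
    beta_reduce at hS0 hSlow
    set S := ∑ j ∈ Finset.range (m+2), (-1:ℤ)^j * (((ℓ (m+1-j) - 1).toNat.choose (j+2) : ℤ)) with hSdef
    simp only [Nat.sub_zero, Nat.add_sub_cancel, Nat.reduceAdd] at hSlow
    have hA2 : 2 ≤ ℓ (m+1) - 1 := hGle (m+1) le_rfl
    have hB2 : 2 ≤ ℓ m - 1 := hGle m (by omega)
    have hc0 : (2:ℤ) * ((ℓ (m+1) - 1).toNat.choose 2 : ℤ) = (ℓ (m+1) - 1)^2 - (ℓ (m+1) - 1) := by
      have h := choose2 (ℓ (m+1) - 1).toNat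
      have h1 : 1 ≤ (ℓ (m+1) - 1).toNat := by omega
      zify [h1] at h
      rw [Int.toNat_of_nonneg (by omega : (0:ℤ) ≤ ℓ (m+1) - 1)] at h
      rw [h]; ring
    have hc1 : (6:ℤ) * ((ℓ m - 1).toNat.choose 3 : ℤ) = (ℓ m - 1)^3 - 3*(ℓ m - 1)^2 + 2*(ℓ m - 1) := by
      have h := choose3 (ℓ m - 1).toNat
      have h1 : 1 ≤ (ℓ m - 1).toNat := by omega
      have h2 : 2 ≤ (ℓ m - 1).toNat := by omega
      zify [h1, h2] at h
      rw [Int.toNat_of_nonneg (by omega : (0:ℤ) ≤ ℓ m - 1)] at h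
      rw [h]; ring
    have hBA : ℓ m - 1 ≤ ℓ (m+1) - 1 := ihm.2.1
    have hinvm : (ℓ m - 1)^2 + (ℓ m - 1) ≤ 3 * (ℓ (m+1) - 1) := ihm.2.2.1
    have hpoly := poly_key (ℓ (m+1) - 1) (ℓ m - 1) hB2 hBA hinvm
    have hmain_new : ℓ (m+2) - 1 = 2 + S := by rw [key, hT]
    refine ⟨hA2, ?_, ?_, hmain_new⟩
    · rw [hmain_new]
      nlinarith [hSlow, hc0, hc1, hpoly, hA2, sq_nonneg (ℓ (m+1) - 1 - 2)]
    · rw [hmain_new]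
      nlinarith [hSlow, hc0, hc1, hpoly, hA2]

theorem hamilton_recursion (ℓ : ℕ → ℤ) (h0 : ℓ 0 = 3)
    (hrec : ∀ n : ℕ, ℓ (n + 1) =
      1 + ∑ j ∈ Finset.range (n + 1), (-1) ^ j * ((ℓ (n - j)).toNat.choose (j + 2) : ℤ)) (H : ℕ → ℤ) (hH : ∀ n : ℕ, 1 ≤ n → H n = ℓ (n - 1) - 1) :
    H 1 = 2 ∧ ∀ n : ℕ, 1 ≤ n →
      H (n + 1) = 2 + ∑ j ∈ Finset.range n,
        (-1) ^ j * (((H (n - j)).toNat.choose (j + 2) : ℤ)) := by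
  constructor
  · rw [hH 1 le_rfl]; simp [h0]
  · intro n hn
    obtain ⟨m, rfl⟩ : ∃ m, n = m + 1 := ⟨n - 1, by omega⟩
    rw [hH (m+1+1) (by omega)]
    simp only [Nat.add_sub_cancel]
    have hmain := (bundle ℓ h0 hrec m).2.2.2
    rw [hmain]
    congr 1
    apply Finset.sum_congr rfl
    intro j hj
    simp only [Finset.mem_range] at hj
    rw [hH (m+1-j) (by omega)]
    have hidx : m + 1 - j - 1 = m - j := by omega
    rw [hidx]
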